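/- Suppose (E₁, τ₁) is a locally solid Riesz space and (E₂, τ₂) is an ordered topological vector space having an order bounded τ₂-neighborhood of zero. Then every topologically continuous linear operator T : E₁ → E₂ is order bounded; consequently the topologically continuous operators form a vector subspace of the order bounded operators. -/

import Mathlib

open Filter Topology Bornology Set

/-- A subset of a Riesz space is solid if `|x| ≤ |y|` and `y ∈ S` imply `x ∈ S`. -/
def SolidSet {E : Type*} [Lattice E] [AddCommGroup E] (S : Set E) : Prop :=
  ∀ ⦃x y : E⦄, |x| ≤ |y| → y ∈ S → x ∈ S

/-- A linear topology on a Riesz space is locally solid if the neighborhood filter at zero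
has a basis of solid sets. -/
def LocallySolid (E : Type*) [Lattice E] [AddCommGroup E] [TopologicalSpace E] : Prop :=
  (𝓝 (0 : E)).HasBasis (fun S : Set E => S ∈ 𝓝 (0 : E) ∧ SolidSet S) id

/-- If `E₁` is a locally solid Riesz space and `E₂` is an ordered topological vector space
with an order bounded neighborhood of zero, then every topologically continuous linear
operator `T : E₁ → E₂` is order bounded (maps order bounded sets to order bounded sets);
consequently the topologically continuous operators form a vector subspace of the order
bounded operators. -/
theorem stmt4 {E₁ E₂ : Type*}
    [AddCommGroup E₁] [Lattice E₁] [Module ℝ E₁]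
    [CovariantClass E₁ E₁ (· + ·) (· ≤ ·)] [PosSMulMono ℝ E₁]
    [TopologicalSpace E₁] [IsTopologicalAddGroup E₁] [ContinuousSMul ℝ E₁]
    [AddCommGroup E₂] [PartialOrder E₂] [IsOrderedAddMonoid E₂] [Module ℝ E₂] [PosSMulMono ℝ E₂]
    [TopologicalSpace E₂] [IsTopologicalAddGroup E₂] [ContinuousSMul ℝ E₂]
    (hls : LocallySolid E₁)
    (hV : ∃ V ∈ 𝓝 (0 : E₂), ∃ a b : E₂, V ⊆ Set.Icc a b)
    (T : E₁ →ₗ[ℝ] E₂) (hT : Continuous T) :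
    ∀ B : Set E₁, (∃ a b : E₁, B ⊆ Set.Icc a b) →
      ∃ a b : E₂, T '' B ⊆ Set.Icc a b := by
  rintro B ⟨a, b, hB⟩
  obtain ⟨V, hVnhds, a', b', hVab⟩ := hV
  have hTV : T ⁻¹' V ∈ 𝓝 (0 : E₁) := by
    have := hT.continuousAt (x := (0 : E₁))
    simpa [map_zero] using this.preimage_mem_nhds (by simpa [map_zero] using hVnhds)
  obtain ⟨S, ⟨hSnhds, hSsolid⟩, hSsub⟩ := (hls.mem_iff).mp hTV
  set c : E₁ := |a| ⊔ |b| with hc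
  have hcnn : (0 : E₁) ≤ c := le_sup_of_le_left (abs_nonneg a)
  have hxc : ∀ x ∈ B, x ≤ c ∧ -x ≤ c := by
    intro x hx
    obtain ⟨hax, hxb⟩ := hB hx
    constructor
    · exact le_trans hxb (le_trans (le_abs_self b) le_sup_right)
    · exact le_trans (neg_le_neg_iff.mpr hax) (le_trans (neg_le_abs a) le_sup_left)
  have hev : ∀ᶠ t : ℝ in 𝓝 0, t • c ∈ S := by
    have hcont : Continuous fun t : ℝ => t • c := continuous_id.smul continuous_const
    have ht : Tendsto (fun t : ℝ => t • c) (𝓝 0) (𝓝 (0 : E₁)) := by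
      simpa using hcont.tendsto (0 : ℝ)
    exact ht.eventually_mem hSnhds
  obtain ⟨ε, hεS, hεpos⟩ := ((hev.filter_mono nhdsWithin_le_nhds).and
    (eventually_mem_nhdsWithin (s := Ioi (0:ℝ)))).exists
  replace hεpos : (0:ℝ) < ε := hεpos
  refine ⟨ε⁻¹ • a', ε⁻¹ • b', ?_⟩
  rintro _ ⟨x, hx, rfl⟩
  have hxS : ε • x ∈ S := by
    have h1 : |ε • x| ≤ ε • c := by
      refine abs_le'.mpr ⟨?_, ?_⟩
      · exact smul_le_smul_of_nonneg_left (hxc x hx).1 hεpos.le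
      · have := smul_le_smul_of_nonneg_left (hxc x hx).2 hεpos.le
        simpa [smul_neg] using this
    have h2 : |ε • c| = ε • c := abs_of_nonneg (smul_nonneg hεpos.le hcnn)
    exact hSsolid (by rw [h2]; exact h1) hεS
  have hTx : ε • T x ∈ Set.Icc a' b' := by
    have := hVab (hSsub hxS)
    simpa [map_smul] using this
  obtain ⟨h1, h2⟩ := hTx
  constructor
  · have := smul_le_smul_of_nonneg_left h1 (inv_nonneg.mpr hεpos.le)
    simpa [smul_smul, inv_mul_cancel₀ hεpos.ne'] using this
  · have := smul_le_smul_of_nonneg_left h2 (inv_nonneg.mpr hεpos.le)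
    simpa [smul_smul, inv_mul_cancel₀ hεpos.ne'] using this
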